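/- Let K be a field of characteristic zero and let Φ(t) ∈ K[t] be a polynomial with Φ(0) ≠ 0 (nonzero constant term). If P ∈ K[x,y] satisfies (∂x − Φ(∂y))∂y P = 0, then ∂y P = 0, i.e., P ∈ K[x]. -/

import Mathlib

open MvPolynomial

section aux
variable {K : Type*} [CommRing K] {σ : Type*}

lemma my_td_pderiv_le (i : σ) (p : MvPolynomial σ K) :
    (pderiv i p).totalDegree ≤ p.totalDegree - 1 := by
  classical
  conv_lhs => rw [p.as_sum]
  rw [map_sum]
  refine (totalDegree_finset_sum _ _).trans (Finset.sup_le fun s hs => ?_)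
  rw [pderiv_monomial]
  by_cases h : s i = 0
  · simp [h]
  · refine (totalDegree_monomial_le _ _).trans ?_
    simp only [Function.id_def]
    have h1 : Finsupp.single i 1 ≤ s := by
      rw [Finsupp.single_le_iff]; omega
    have h2 : (s - Finsupp.single i 1) + Finsupp.single i 1 = s := tsub_add_cancel_of_le h1
    have hsum : (s - Finsupp.single i 1).sum (fun _ e => e) + 1 = s.sum (fun _ e => e) := by
      conv_rhs => rw [← h2]
      rw [Finsupp.sum_add_index (by simp) (by intros; rfl)]
      simp
    have hts : s.sum (fun _ e => e) ≤ p.totalDegree := le_totalDegree hs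
    omega

lemma my_pderiv_iterate_zero (i : σ) :
    ∀ n (p : MvPolynomial σ K), p.totalDegree ≤ n → (pderiv i)^[n + 1] p = 0 := by
  intro n
  induction n with
  | zero =>
    intro p hp
    rw [Nat.le_zero, totalDegree_eq_zero_iff] at hp
    rw [Function.iterate_one]
    conv_lhs => rw [p.as_sum]
    rw [map_sum]
    refine Finset.sum_eq_zero fun s hs => ?_
    rw [pderiv_monomial, hp s hs i]
    simp
  | succ n ih =>
    intro p hp
    rw [Function.iterate_succ_apply]
    exact ih _ ((my_td_pderiv_le i p).trans (by omega))

lemma my_pderiv_comm (i j : σ) (p : MvPolynomial σ K) :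
    pderiv i (pderiv j p) = pderiv j (pderiv i p) := by
  classical
  rcases eq_or_ne i j with rfl | hij
  · rfl
  induction p using MvPolynomial.induction_on' with
  | monomial s a =>
    simp only [pderiv_monomial]
    rw [Finsupp.tsub_apply, Finsupp.tsub_apply, Finsupp.single_eq_of_ne hij,
      Finsupp.single_eq_of_ne (Ne.symm hij)]
    rw [tsub_right_comm]
    simp only [Nat.sub_zero]
    ring_nf
  | add p q hp hq => simp [map_add, hp, hq]

end aux

/-- The partial derivative ∂x as a linear endomorphism of K[x,y]. -/
noncomputable def Dx (K : Type*) [CommRing K] : Module.End K (MvPolynomial (Fin 2) K) :=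
  (MvPolynomial.pderiv (0 : Fin 2)).toLinearMap

/-- The partial derivative ∂y as a linear endomorphism of K[x,y]. -/
noncomputable def Dy (K : Type*) [CommRing K] : Module.End K (MvPolynomial (Fin 2) K) :=
  (MvPolynomial.pderiv (1 : Fin 2)).toLinearMap

/-- The operator Λ = (∂x − Φ(∂y))∂y on K[x,y]. -/
noncomputable def Lam (K : Type*) [CommRing K] (Φ : Polynomial K) :
    Module.End K (MvPolynomial (Fin 2) K) :=
  (Dx K - Polynomial.aeval (Dy K) Φ) * Dy K

lemma my_Dy_pow_apply (K : Type*) [CommRing K] (n : ℕ) (p : MvPolynomial (Fin 2) K) :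
    (Dy K ^ n) p = (pderiv (1 : Fin 2))^[n] p := by
  rw [Module.End.pow_apply]
  rfl

lemma my_Dx_pow_apply (K : Type*) [CommRing K] (n : ℕ) (p : MvPolynomial (Fin 2) K) :
    (Dx K ^ n) p = (pderiv (0 : Fin 2))^[n] p := by
  rw [Module.End.pow_apply]
  rfl

lemma my_commute_Dx_Dy (K : Type*) [CommRing K] : Commute (Dx K) (Dy K) :=
  LinearMap.ext fun p => my_pderiv_comm 0 1 p

theorem stmt5 (K : Type*) [Field K] [CharZero K] (Φ : Polynomial K)
    (hΦ : Φ.coeff 0 ≠ 0) (P : MvPolynomial (Fin 2) K)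
    (h : Lam K Φ P = 0) : Dy K P = 0 := by
  set Q := Dy K P with hQdef
  set A := Polynomial.aeval (Dy K) Φ with hAdef
  have h0 : Dx K Q = A Q := by
    have : (Dx K - A) Q = 0 := by
      simpa [Lam, Module.End.mul_apply] using h
    rw [LinearMap.sub_apply] at this
    exact sub_eq_zero.mp this
  classical
  by_contra hQ0
  have hnil : ∃ n, (Dy K ^ n) Q = 0 :=
    ⟨Q.totalDegree + 1, by
      rw [my_Dy_pow_apply]
      exact my_pderiv_iterate_zero _ _ _ le_rfl⟩
  set n := Nat.find hnil with hn
  have hnspec : (Dy K ^ n) Q = 0 := Nat.find_spec hnil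
  have hn0 : n ≠ 0 := by
    intro h'
    rw [h'] at hnspec
    simp at hnspec
    exact hQ0 hnspec
  set R := (Dy K ^ (n - 1)) Q with hRdef
  have hR0 : R ≠ 0 := Nat.find_min hnil (by omega)
  have hDyR : Dy K R = 0 := by
    rw [hRdef, ← Module.End.mul_apply, ← pow_succ']
    rw [show n - 1 + 1 = n by omega]
    exact hnspec
  have hcommA : Commute (Dy K) A := by
    have := (Commute.all (Polynomial.X : Polynomial K) Φ).map (Polynomial.aeval (Dy K))
    rwa [Polynomial.aeval_X] at this
  have hEq : Dx K R = A R := by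
    have h1 : (Dy K ^ (n - 1)) (Dx K Q) = (Dy K ^ (n - 1)) (A Q) := congrArg _ h0
    have e1 : (Dy K ^ (n - 1)) (Dx K Q) = Dx K R := by
      rw [hRdef, ← Module.End.mul_apply, ← Module.End.mul_apply,
        ((my_commute_Dx_Dy K).symm.pow_left (n - 1)).eq]
      rfl
    have e2 : (Dy K ^ (n - 1)) (A Q) = A R := by
      rw [hRdef, ← Module.End.mul_apply, ← Module.End.mul_apply, (hcommA.pow_left (n - 1)).eq]
      rfl
    rw [e1, e2] at h1
    exact h1
  have hAR : A R = Φ.coeff 0 • R := by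
    rw [hAdef]
    conv_lhs => rw [← Φ.divX_mul_X_add]
    rw [map_add, map_mul, Polynomial.aeval_X, Polynomial.aeval_C]
    simp [Module.End.mul_apply, hDyR, Module.algebraMap_end_apply]
  have key : ∀ m, (Dx K ^ m) R = (Φ.coeff 0) ^ m • R := by
    intro m
    induction m with
    | zero => simp
    | succ m ih =>
      rw [pow_succ', Module.End.mul_apply, ih, map_smul, hEq, hAR, smul_smul, pow_succ]
  have hzero : (Dx K ^ (R.totalDegree + 1)) R = 0 := by
    rw [my_Dx_pow_apply]
    exact my_pderiv_iterate_zero _ _ _ le_rfl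
  rw [key] at hzero
  rcases smul_eq_zero.mp hzero with h' | h'
  · exact pow_ne_zero _ hΦ h'
  · exact hR0 h'
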